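/- Let (Y, A, X) be a recollement of abelian categories. If A is AB5 (has exact filtered colimits) then so are X and Y. -/

import Mathlib

open CategoryTheory Limits

universe v u u₁ u₂ u₃

/-- A recollement of categories: adjoint triples `(i^*, i_*, i^!)` and `(j_!, j^*, j_*)`,
with `i_*`, `j_!`, `j_*` fully faithful and the essential image of `i_*` equal to the
kernel of `j^*`. -/
structure Recollement (Y : Type u₁) (A : Type u₂) (X : Type u₃)
    [Category.{v} Y] [Category.{v} A] [Category.{v} X] where
  /-- `i_* : Y ⥤ A` -/
  iStar : Y ⥤ A
  /-- `i^* : A ⥤ Y` -/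
  iUp : A ⥤ Y
  /-- `i^! : A ⥤ Y` -/
  iShriek : A ⥤ Y
  /-- `j^* : A ⥤ X` -/
  jUp : A ⥤ X
  /-- `j_! : X ⥤ A` -/
  jLower : X ⥤ A
  /-- `j_* : X ⥤ A` -/
  jRight : X ⥤ A
  adj_i₁ : iUp ⊣ iStar
  adj_i₂ : iStar ⊣ iShriek
  adj_j₁ : jLower ⊣ jUp
  adj_j₂ : jUp ⊣ jRight
  iStar_full : iStar.Full
  iStar_faithful : iStar.Faithful
  jLower_full : jLower.Full
  jLower_faithful : jLower.Faithful
  jRight_full : jRight.Full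
  jRight_faithful : jRight.Faithful
  essImage_iff : ∀ M : A, iStar.essImage M ↔ IsZero (jUp.obj M)

variable {Y : Type u₁} {A : Type u₂} {X : Type u₃}
  [Category.{v} Y] [Category.{v} A] [Category.{v} X]

/-- The class `C = Ker i^*` of the TTF triple associated to a recollement. -/
def Recollement.C (R : Recollement Y A X) : A → Prop := fun M => IsZero (R.iUp.obj M)

/-- The class `T = Im i_*` of the TTF triple associated to a recollement. -/
def Recollement.T (R : Recollement Y A X) : A → Prop := fun M => R.iStar.essImage M

/-- The class `F = Ker i^!` of the TTF triple associated to a recollement. -/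
def Recollement.F (R : Recollement Y A X) : A → Prop := fun M => IsZero (R.iShriek.obj M)

/-- An (additive) functor between abelian categories is exact if it preserves finite
limits and finite colimits. -/
def IsExactFunctor {C D : Type*} [Category C] [Category D] (G : C ⥤ D) : Prop :=
  Nonempty (PreservesFiniteLimits G) ∧ Nonempty (PreservesFiniteColimits G)

/-- An abelian category is AB5 if it is cocomplete (AB3) and direct limits over any
directed set are exact. -/
structure IsAB5 (C : Type u) [Category.{v} C] [Abelian C] : Prop where
  hasColimits : HasColimits C
  exactDirected : ∀ (Λ : Type v) [Preorder Λ] [IsDirected Λ (· ≤ ·)] [Nonempty Λ],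
    letI := hasColimits
    Nonempty (PreservesFiniteLimits (colim (J := Λ) (C := C)))

/-- In a recollement of abelian categories, if the middle term is AB5, then so are the
outer terms. -/
theorem recollement_isAB5 [Abelian Y] [Abelian A] [Abelian X]
    (R : Recollement Y A X) (hA : IsAB5 A) :
    IsAB5 X ∧ IsAB5 Y := by
  letI : HasColimits A := hA.hasColimits
  haveI := R.iStar_full; haveI := R.iStar_faithful
  haveI := R.jRight_full; haveI := R.jRight_faithful
  letI : Reflective R.jRight := { L := R.jUp, adj := R.adj_j₂ }
  letI : Reflective R.iStar := { L := R.iUp, adj := R.adj_i₁ }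
  haveI hXc : HasColimits X := hasColimits_of_reflective R.jRight
  haveI hYc : HasColimits Y := hasColimits_of_reflective R.iStar
  haveI : PreservesLimits R.jUp := R.adj_j₁.rightAdjoint_preservesLimits
  haveI : PreservesColimits R.jUp := R.adj_j₂.leftAdjoint_preservesColimits
  haveI : PreservesLimits R.jRight := R.adj_j₂.rightAdjoint_preservesLimits
  haveI : PreservesLimits R.iStar := R.adj_i₁.rightAdjoint_preservesLimits
  haveI : PreservesColimits R.iStar := R.adj_i₂.leftAdjoint_preservesColimits
  constructor
  · refine ⟨hXc, fun Λ _ _ _ => ?_⟩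
    haveI : PreservesFiniteLimits (colim (J := Λ) (C := A)) := (hA.exactDirected Λ).some
    haveI : PreservesFiniteLimits ((Functor.whiskeringRight Λ X A).obj R.jRight) :=
      ⟨fun J _ _ => inferInstance⟩
    haveI : PreservesFiniteLimits R.jUp := ⟨fun J _ _ => inferInstance⟩
    haveI := comp_preservesFiniteLimits (colim (J := Λ) (C := A)) R.jUp
    haveI := comp_preservesFiniteLimits ((Functor.whiskeringRight Λ X A).obj R.jRight)
      (colim (J := Λ) (C := A) ⋙ R.jUp)
    let e : (Functor.whiskeringRight Λ X A).obj R.jRight ⋙ colim (J := Λ) (C := A) ⋙ R.jUp ≅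
        colim (J := Λ) (C := X) :=
      Functor.isoWhiskerLeft _ (preservesColimitNatIso R.jUp) ≪≫
        Functor.isoWhiskerRight ((Functor.whiskeringRight Λ X X).mapIso (asIso R.adj_j₂.counit)) colim
    exact ⟨preservesFiniteLimits_of_natIso e⟩
  · refine ⟨hYc, fun Λ _ _ _ => ?_⟩
    haveI : PreservesFiniteLimits (colim (J := Λ) (C := A)) := (hA.exactDirected Λ).some
    haveI : PreservesFiniteLimits ((Functor.whiskeringRight Λ Y A).obj R.iStar) :=
      ⟨fun J _ _ => inferInstance⟩
    haveI := comp_preservesFiniteLimits ((Functor.whiskeringRight Λ Y A).obj R.iStar)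
      (colim (J := Λ) (C := A))
    haveI : PreservesFiniteLimits (colim (J := Λ) (C := Y) ⋙ R.iStar) :=
      preservesFiniteLimits_of_natIso (preservesColimitNatIso R.iStar).symm
    exact ⟨preservesFiniteLimits_of_reflects_of_preserves colim R.iStar⟩
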